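/- Assume that ‖Z_t‖ ≤ 2√‖X‖ and ‖Δ_t‖ ≤ ‖X‖. Then the imbalance matrix satisfies ‖Z̃_{t+1}ᵀZ_{t+1}‖ ≤ ‖Z̃_tᵀZ_t‖ + 400μ²‖X‖³. -/

import Mathlib

open Matrix MeasureTheory ProbabilityTheory

noncomputable section

namespace AsymMatrixSensing

/-- Euclidean norm of a real vector. -/
def euclNorm {ι : Type*} [Fintype ι] (v : ι → ℝ) : ℝ :=
  Real.sqrt (∑ i, v i ^ 2)

/-- Spectral norm of a real matrix. -/
def specNorm {ι₁ ι₂ : Type*} [Fintype ι₁] [Fintype ι₂] (M : Matrix ι₁ ι₂ ℝ) : ℝ :=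
  sSup {c : ℝ | ∃ x : ι₂ → ℝ, euclNorm x ≤ 1 ∧ c = euclNorm (M.mulVec x)}

/-- Frobenius norm of a real matrix. -/
def frobNorm {ι₁ ι₂ : Type*} [Fintype ι₁] [Fintype ι₂] (M : Matrix ι₁ ι₂ ℝ) : ℝ :=
  Real.sqrt (∑ i, ∑ j, M i j ^ 2)

/-- Nuclear norm of a real matrix (characterized by duality with the spectral norm). -/
def nucNorm {ι₁ ι₂ : Type*} [Fintype ι₁] [Fintype ι₂] (M : Matrix ι₁ ι₂ ℝ) : ℝ :=
  sSup {c : ℝ | ∃ B : Matrix ι₁ ι₂ ℝ, specNorm B ≤ 1 ∧ c = ∑ i, ∑ j, M i j * B i j}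

/-- Smallest singular value `σ_{min(a,b)}(M)` of a matrix. -/
def sigmaMin {ι₁ ι₂ : Type*} [Fintype ι₁] [Fintype ι₂] (M : Matrix ι₁ ι₂ ℝ) : ℝ :=
  max (sInf {c : ℝ | ∃ x : ι₂ → ℝ, euclNorm x = 1 ∧ c = euclNorm (M.mulVec x)})
      (sInf {c : ℝ | ∃ y : ι₁ → ℝ, euclNorm y = 1 ∧ c = euclNorm (Mᵀ.mulVec y)})

/-- Smallest nonzero singular value `σ_rank(M)`: the minimum of `‖Mx‖` over unit
vectors `x` orthogonal to the kernel of `M`. -/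
def sigmaPos {ι₁ ι₂ : Type*} [Fintype ι₁] [Fintype ι₂] (M : Matrix ι₁ ι₂ ℝ) : ℝ :=
  sInf {c : ℝ | ∃ x : ι₂ → ℝ, euclNorm x = 1 ∧
    (∀ y : ι₂ → ℝ, M.mulVec y = 0 → x ⬝ᵥ y = 0) ∧ c = euclNorm (M.mulVec x)}

/-- Condition number `κ = ‖M‖ / σ_min(M)`. -/
def condNum {ι₁ ι₂ : Type*} [Fintype ι₁] [Fintype ι₂] (M : Matrix ι₁ ι₂ ℝ) : ℝ :=
  specNorm M / sigmaPos M

/-- Trace inner product `⟨M, N⟩ = trace(Mᵀ N)`. -/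
def minner {ι₁ ι₂ : Type*} [Fintype ι₁] [Fintype ι₂] (M N : Matrix ι₁ ι₂ ℝ) : ℝ :=
  ∑ i, ∑ j, M i j * N i j

/-- `P` is a matrix with orthonormal columns spanning the column space of `M`. -/
def IsOrthCol {ι κ₁ κ₂ : Type*} [Fintype ι] [Fintype κ₁] [Fintype κ₂] [DecidableEq κ₂]
    (P : Matrix ι κ₂ ℝ) (M : Matrix ι κ₁ ℝ) : Prop :=
  Pᵀ * P = 1 ∧ (∃ C : Matrix κ₁ κ₂ ℝ, P = M * C) ∧ P * Pᵀ * M = M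

/-- `L` has orthonormal columns spanning the subspace spanned by eigenvectors of the
symmetric matrix `F` corresponding to its `r` largest eigenvalues. -/
def IsTopEigenspace {ι : Type*} [Fintype ι] [DecidableEq ι] {r : ℕ} (F : Matrix ι ι ℝ)
    (L : Matrix ι (Fin r) ℝ) : Prop :=
  Lᵀ * L = 1 ∧ ∃ d : Fin r → ℝ, F * L = L * Matrix.diagonal d ∧
    ∀ (v : ι → ℝ) (lam : ℝ), v ≠ 0 → F.mulVec v = lam • v →
      Lᵀ.mulVec v = 0 → ∀ i, lam ≤ d i

variable {n₁ n₂ m k r : ℕ}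

/-- The measurement operator `𝒜`, given by `[𝒜(Z)]ᵢ = ⟨Aᵢ, Z⟩`. -/
def calA (A : Fin m → Matrix (Fin n₁) (Fin n₂) ℝ) (Z : Matrix (Fin n₁) (Fin n₂) ℝ) :
    Fin m → ℝ := fun i => minner (A i) Z

/-- The restricted isometry property of order `s` with constant `δ`. -/
def HasRIP (A : Fin m → Matrix (Fin n₁) (Fin n₂) ℝ) (s : ℕ) (δ : ℝ) : Prop :=
  ∀ M : Matrix (Fin n₁) (Fin n₂) ℝ, M.rank ≤ s →
    (1 - δ) * frobNorm M ^ 2 ≤ ∑ i, calA A M i ^ 2 ∧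
      ∑ i, calA A M i ^ 2 ≤ (1 + δ) * frobNorm M ^ 2

/-- `𝒜*𝒜`. -/
def AstarA (A : Fin m → Matrix (Fin n₁) (Fin n₂) ℝ) (Z : Matrix (Fin n₁) (Fin n₂) ℝ) :
    Matrix (Fin n₁) (Fin n₂) ℝ := ∑ i, minner (A i) Z • A i

/-- The symmetrization `sym(X) = [[0, X], [Xᵀ, 0]]`. -/
def symMat (X : Matrix (Fin n₁) (Fin n₂) ℝ) :
    Matrix (Fin n₁ ⊕ Fin n₂) (Fin n₁ ⊕ Fin n₂) ℝ := Matrix.fromBlocks 0 X Xᵀ 0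

/-- The symmetrized measurement matrices `Bᵢ = (1/√2)[[0, Aᵢ], [Aᵢᵀ, 0]]`. -/
def Bmat (A : Fin m → Matrix (Fin n₁) (Fin n₂) ℝ) (i : Fin m) :
    Matrix (Fin n₁ ⊕ Fin n₂) (Fin n₁ ⊕ Fin n₂) ℝ :=
  (Real.sqrt 2)⁻¹ • Matrix.fromBlocks 0 (A i) (A i)ᵀ 0

/-- `ℬ*ℬ`. -/
def BstarB (A : Fin m → Matrix (Fin n₁) (Fin n₂) ℝ)
    (S : Matrix (Fin n₁ ⊕ Fin n₂) (Fin n₁ ⊕ Fin n₂) ℝ) :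
    Matrix (Fin n₁ ⊕ Fin n₂) (Fin n₁ ⊕ Fin n₂) ℝ :=
  ∑ i, minner (Bmat A i) S • Bmat A i

/-- The factorized gradient descent iterates `(V_t, W_t)`. -/
def iter (A : Fin m → Matrix (Fin n₁) (Fin n₂) ℝ) (X : Matrix (Fin n₁) (Fin n₂) ℝ)
    (μ : ℝ) (V₀ : Matrix (Fin n₁) (Fin k) ℝ) (W₀ : Matrix (Fin n₂) (Fin k) ℝ) :
    ℕ → Matrix (Fin n₁) (Fin k) ℝ × Matrix (Fin n₂) (Fin k) ℝ
  | 0 => (V₀, W₀)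
  | t + 1 =>
    let p := iter A X μ V₀ W₀ t
    let G := AstarA A (p.1 * p.2ᵀ - X)
    (p.1 - μ • (G * p.2), p.2 - μ • (Gᵀ * p.1))

/-- The vertical stacking `(1/√2)[V; W]`. -/
def Zstack {κ : ℕ} (V : Matrix (Fin n₁) (Fin κ) ℝ) (W : Matrix (Fin n₂) (Fin κ) ℝ) :
    Matrix (Fin n₁ ⊕ Fin n₂) (Fin κ) ℝ :=
  (Real.sqrt 2)⁻¹ • Matrix.fromRows V W

/-- `Z_t = (1/√2)[V_t; W_t]`. -/
def Zit (A : Fin m → Matrix (Fin n₁) (Fin n₂) ℝ) (X : Matrix (Fin n₁) (Fin n₂) ℝ)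
    (μ : ℝ) (V₀ : Matrix (Fin n₁) (Fin k) ℝ) (W₀ : Matrix (Fin n₂) (Fin k) ℝ) (t : ℕ) :
    Matrix (Fin n₁ ⊕ Fin n₂) (Fin k) ℝ :=
  Zstack (iter A X μ V₀ W₀ t).1 (iter A X μ V₀ W₀ t).2

/-- `Z̃_t = (1/√2)[V_t; −W_t]`. -/
def Ztil (A : Fin m → Matrix (Fin n₁) (Fin n₂) ℝ) (X : Matrix (Fin n₁) (Fin n₂) ℝ)
    (μ : ℝ) (V₀ : Matrix (Fin n₁) (Fin k) ℝ) (W₀ : Matrix (Fin n₂) (Fin k) ℝ) (t : ℕ) :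
    Matrix (Fin n₁ ⊕ Fin n₂) (Fin k) ℝ :=
  Zstack (iter A X μ V₀ W₀ t).1 (-(iter A X μ V₀ W₀ t).2)

/-- `Δ_t = (Id − ℬ*ℬ)(Z_tZ_tᵀ − Z̃_tZ̃_tᵀ − sym(X))`. -/
def Δit (A : Fin m → Matrix (Fin n₁) (Fin n₂) ℝ) (X : Matrix (Fin n₁) (Fin n₂) ℝ)
    (μ : ℝ) (V₀ : Matrix (Fin n₁) (Fin k) ℝ) (W₀ : Matrix (Fin n₂) (Fin k) ℝ) (t : ℕ) :
    Matrix (Fin n₁ ⊕ Fin n₂) (Fin n₁ ⊕ Fin n₂) ℝ :=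
  let D := Zit A X μ V₀ W₀ t * (Zit A X μ V₀ W₀ t)ᵀ
    - Ztil A X μ V₀ W₀ t * (Ztil A X μ V₀ W₀ t)ᵀ - symMat X
  D - BstarB A D

/-- The block diagonal matrix `diag(Id_{n₁}, −Id_{n₂})`. -/
def flipSign (n₁ n₂ : ℕ) : Matrix (Fin n₁ ⊕ Fin n₂) (Fin n₁ ⊕ Fin n₂) ℝ :=
  Matrix.fromBlocks 1 0 0 (-1)

/-- Product Gaussian measure modelling the random initialization pair `(V, W)`
with i.i.d. standard Gaussian entries. -/
def gaussPair (n₁ n₂ k : ℕ) :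
    Measure ((Fin n₁ → Fin k → ℝ) × (Fin n₂ → Fin k → ℝ)) :=
  (Measure.pi fun _ : Fin n₁ => Measure.pi fun _ : Fin k => gaussianReal 0 1).prod
    (Measure.pi fun _ : Fin n₂ => Measure.pi fun _ : Fin k => gaussianReal 0 1)


/-! ### Auxiliary lemmas -/

open scoped Matrix.Norms.L2Operator

set_option linter.unusedSectionVars false in
lemma euclNorm_eq_norm {ι₁ : Type*} [Fintype ι₁] (v : ι₁ → ℝ) :
    euclNorm v = ‖(WithLp.equiv 2 (ι₁ → ℝ)).symm v‖ := by
  rw [euclNorm, EuclideanSpace.norm_eq]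
  congr 1
  refine Finset.sum_congr rfl fun i _ => ?_
  rw [WithLp.equiv_symm_apply, WithLp.ofLp_toLp, Real.norm_eq_abs, sq_abs]

section SpecNormTools

variable {ι₁ ι₂ ι₃ : Type*} [Fintype ι₁] [Fintype ι₂] [Fintype ι₃]
  [DecidableEq ι₁] [DecidableEq ι₂] [DecidableEq ι₃]

set_option linter.unusedSectionVars false

lemma specNorm_eq_l2 (M : Matrix ι₁ ι₂ ℝ) : specNorm M = ‖M‖ := by
  rw [Matrix.l2_opNorm_def, ← ContinuousLinearMap.sSup_unitClosedBall_eq_norm]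
  refine congrArg sSup ?_
  ext c
  simp only [Set.mem_setOf_eq, Set.mem_image, Metric.mem_closedBall, dist_zero_right]
  constructor
  · rintro ⟨x, hx, rfl⟩
    refine ⟨(WithLp.equiv 2 (ι₂ → ℝ)).symm x, by rwa [← euclNorm_eq_norm], ?_⟩
    simp only [LinearEquiv.trans_apply, LinearMap.coe_toContinuousLinearMap',
      WithLp.equiv_symm_apply, Matrix.toEuclideanLin_apply_piLp_toLp]
    rw [euclNorm_eq_norm]; rfl
  · rintro ⟨x, hx, rfl⟩
    refine ⟨WithLp.equiv 2 (ι₂ → ℝ) x, ?_, ?_⟩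
    · rw [euclNorm_eq_norm]; simpa using hx
    · simp only [LinearEquiv.trans_apply, LinearMap.coe_toContinuousLinearMap']
      rw [euclNorm_eq_norm]
      congr 1

lemma specNorm_nonneg' (M : Matrix ι₁ ι₂ ℝ) : 0 ≤ specNorm M := by
  rw [specNorm_eq_l2]; exact norm_nonneg _

lemma specNorm_sub_le (M N : Matrix ι₁ ι₂ ℝ) :
    specNorm (M - N) ≤ specNorm M + specNorm N := by
  simp only [specNorm_eq_l2]; exact norm_sub_le _ _

lemma specNorm_mul_le (M : Matrix ι₁ ι₂ ℝ) (N : Matrix ι₂ ι₃ ℝ) :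
    specNorm (M * N) ≤ specNorm M * specNorm N := by
  simp only [specNorm_eq_l2]; exact Matrix.l2_opNorm_mul M N

lemma specNorm_smul (c : ℝ) (M : Matrix ι₁ ι₂ ℝ) :
    specNorm (c • M) = |c| * specNorm M := by
  simp only [specNorm_eq_l2]
  exact norm_smul c M

lemma specNorm_transpose (M : Matrix ι₁ ι₂ ℝ) : specNorm Mᵀ = specNorm M := by
  simp only [specNorm_eq_l2]
  rw [show Mᵀ = Mᴴ by ext i j; simp [Matrix.conjTranspose_apply]]
  exact Matrix.l2_opNorm_conjTranspose M

lemma euclNorm_nonneg (v : ι₁ → ℝ) : 0 ≤ euclNorm v := Real.sqrt_nonneg _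

lemma sq_euclNorm (v : ι₁ → ℝ) : euclNorm v ^ 2 = ∑ i, v i ^ 2 := by
  rw [euclNorm, Real.sq_sqrt]
  positivity

lemma euclNorm_mulVec_le (M : Matrix ι₁ ι₂ ℝ) (x : ι₂ → ℝ) :
    euclNorm (M *ᵥ x) ≤ specNorm M * euclNorm x := by
  rw [specNorm_eq_l2, euclNorm_eq_norm, euclNorm_eq_norm]
  exact Matrix.l2_opNorm_mulVec M ((WithLp.equiv 2 (ι₂ → ℝ)).symm x)

lemma specNorm_le_bound {a : ℝ} (ha : 0 ≤ a) (M : Matrix ι₁ ι₂ ℝ)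
    (h : ∀ x : ι₂ → ℝ, euclNorm (M *ᵥ x) ≤ a * euclNorm x) : specNorm M ≤ a := by
  rw [specNorm_eq_l2, Matrix.l2_opNorm_def]
  refine ContinuousLinearMap.opNorm_le_bound _ ha fun x => ?_
  have := h (WithLp.equiv 2 (ι₂ → ℝ) x)
  rw [euclNorm_eq_norm, euclNorm_eq_norm] at this
  simpa [Matrix.toEuclideanLin_apply] using this

lemma sq_euclNorm_sumElim (u : ι₁ → ℝ) (v : ι₂ → ℝ) :
    euclNorm (Sum.elim u v) ^ 2 = euclNorm u ^ 2 + euclNorm v ^ 2 := by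
  simp [sq_euclNorm, Fintype.sum_sum_type]

end SpecNormTools

variable {n₁ n₂ m k : ℕ}

lemma specNorm_symMat_le (S : Matrix (Fin n₁) (Fin n₂) ℝ) :
    specNorm (symMat S) ≤ specNorm S := by
  refine specNorm_le_bound (specNorm_nonneg' S) _ fun x => ?_
  rw [symMat, Matrix.fromBlocks_mulVec, Matrix.zero_mulVec, Matrix.zero_mulVec, zero_add, add_zero]
  have h1 := euclNorm_mulVec_le S (x ∘ Sum.inr)
  have h2 := euclNorm_mulVec_le Sᵀ (x ∘ Sum.inl)
  rw [specNorm_transpose] at h2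
  have hsq := sq_euclNorm_sumElim (S *ᵥ (x ∘ Sum.inr)) (Sᵀ *ᵥ (x ∘ Sum.inl))
  have hx : euclNorm x ^ 2 = euclNorm (x ∘ Sum.inl) ^ 2 + euclNorm (x ∘ Sum.inr) ^ 2 := by
    simp [sq_euclNorm, Fintype.sum_sum_type]
  have h0 := specNorm_nonneg' S
  have e0 := euclNorm_nonneg (Sum.elim (S *ᵥ (x ∘ Sum.inr)) (Sᵀ *ᵥ (x ∘ Sum.inl)))
  have e1 := euclNorm_nonneg (S *ᵥ (x ∘ Sum.inr))
  have e2 := euclNorm_nonneg (Sᵀ *ᵥ (x ∘ Sum.inl))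
  have n0 := euclNorm_nonneg x
  have n1 := euclNorm_nonneg (x ∘ Sum.inl)
  have n2 := euclNorm_nonneg (x ∘ Sum.inr)
  have hsq2 : euclNorm (Sum.elim (S *ᵥ (x ∘ Sum.inr)) (Sᵀ *ᵥ (x ∘ Sum.inl))) ^ 2
      ≤ (specNorm S * euclNorm x) ^ 2 := by
    rw [hsq, mul_pow, hx]
    have p1 : euclNorm (S *ᵥ (x ∘ Sum.inr)) ^ 2 ≤ specNorm S ^ 2 * euclNorm (x ∘ Sum.inr) ^ 2 := by
      nlinarith
    have p2 : euclNorm (Sᵀ *ᵥ (x ∘ Sum.inl)) ^ 2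
        ≤ specNorm S ^ 2 * euclNorm (x ∘ Sum.inl) ^ 2 := by
      nlinarith
    nlinarith
  have := Real.sqrt_le_sqrt hsq2
  rwa [Real.sqrt_sq e0, Real.sqrt_sq (mul_nonneg h0 n0)] at this

lemma specNorm_flipSign_le : specNorm (flipSign n₁ n₂) ≤ 1 := by
  refine specNorm_le_bound zero_le_one _ fun x => ?_
  rw [flipSign, Matrix.fromBlocks_mulVec, Matrix.zero_mulVec, Matrix.zero_mulVec, zero_add,
    add_zero, Matrix.one_mulVec, one_mul]
  have : euclNorm (Sum.elim (x ∘ Sum.inl) ((-1 : Matrix (Fin n₂) (Fin n₂) ℝ) *ᵥ (x ∘ Sum.inr)))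
      = euclNorm x := by
    have : ((-1 : Matrix (Fin n₂) (Fin n₂) ℝ) *ᵥ (x ∘ Sum.inr)) = -(x ∘ Sum.inr) := by
      rw [Matrix.neg_mulVec, Matrix.one_mulVec]
    rw [this, euclNorm, euclNorm]
    congr 1
    rw [Fintype.sum_sum_type]
    simp
  rw [this]

lemma symMat_transpose (S : Matrix (Fin n₁) (Fin n₂) ℝ) : (symMat S)ᵀ = symMat S := by
  rw [symMat, Matrix.fromBlocks_transpose]
  simp

lemma symMat_sub (S T : Matrix (Fin n₁) (Fin n₂) ℝ) :
    symMat (S - T) = symMat S - symMat T := by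
  ext (i | i) (j | j) <;> simp [symMat]

lemma symMat_mul_Zstack (G : Matrix (Fin n₁) (Fin n₂) ℝ) (V : Matrix (Fin n₁) (Fin k) ℝ)
    (W : Matrix (Fin n₂) (Fin k) ℝ) :
    symMat G * Zstack V W = Zstack (G * W) (Gᵀ * V) := by
  rw [symMat, Zstack, Zstack, Matrix.mul_smul, Matrix.fromBlocks_mul_fromRows]
  simp

lemma Zstack_sub_smul (V P : Matrix (Fin n₁) (Fin k) ℝ) (W Q : Matrix (Fin n₂) (Fin k) ℝ)
    (c : ℝ) : Zstack (V - c • P) (W - c • Q) = Zstack V W - c • Zstack P Q := by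
  ext (i | i) j <;> simp [Zstack] <;> ring

lemma Zstack_mul_transpose (V V' : Matrix (Fin n₁) (Fin k) ℝ)
    (W W' : Matrix (Fin n₂) (Fin k) ℝ) :
    Zstack V W * (Zstack V' W')ᵀ
      = (2 : ℝ)⁻¹ • Matrix.fromBlocks (V * V'ᵀ) (V * W'ᵀ) (W * V'ᵀ) (W * W'ᵀ) := by
  rw [Zstack, Zstack, Matrix.transpose_smul, Matrix.smul_mul, Matrix.mul_smul, smul_smul,
    Matrix.transpose_fromRows, Matrix.fromRows_mul_fromCols]
  congr 1
  rw [← mul_inv, Real.mul_self_sqrt (by norm_num)]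

lemma BstarB_symMat (A : Fin m → Matrix (Fin n₁) (Fin n₂) ℝ) (T : Matrix (Fin n₁) (Fin n₂) ℝ) :
    BstarB A (symMat T) = symMat (AstarA A T) := by
  have hs2 : Real.sqrt 2 ≠ 0 := by positivity
  have hcoef : ∀ i, minner (Bmat A i) (symMat T) = Real.sqrt 2 * minner (A i) T := by
    intro i
    have : minner (Matrix.fromBlocks 0 (A i) (A i)ᵀ 0) (symMat T) = 2 * minner (A i) T := by
      rw [minner, symMat, Fintype.sum_sum_type]
      simp only [Fintype.sum_sum_type, Matrix.fromBlocks_apply₁₁, Matrix.fromBlocks_apply₁₂,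
        Matrix.fromBlocks_apply₂₁, Matrix.fromBlocks_apply₂₂, Matrix.zero_apply, zero_mul,
        Finset.sum_const_zero, zero_add, add_zero, Matrix.transpose_apply]
      rw [minner, two_mul]
      congr 1
      rw [Finset.sum_comm]
    rw [Bmat, minner]
    simp only [Matrix.smul_apply, smul_eq_mul]
    have : (∑ a, ∑ b, ((Real.sqrt 2)⁻¹ * Matrix.fromBlocks 0 (A i) (A i)ᵀ 0 a b) * symMat T a b)
        = (Real.sqrt 2)⁻¹ * ∑ a, ∑ b, Matrix.fromBlocks 0 (A i) (A i)ᵀ 0 a b * symMat T a b := by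
      rw [Finset.mul_sum]
      refine Finset.sum_congr rfl fun a _ => ?_
      rw [Finset.mul_sum]
      refine Finset.sum_congr rfl fun b _ => ?_
      ring
    rw [this, show (∑ a, ∑ b, Matrix.fromBlocks 0 (A i) (A i)ᵀ 0 a b * symMat T a b)
        = minner (Matrix.fromBlocks 0 (A i) (A i)ᵀ 0) (symMat T) from rfl, ‹minner _ _ = _›]
    rw [show ((2:ℝ) * minner (A i) T) = Real.sqrt 2 * (Real.sqrt 2 * minner (A i) T) by
        rw [← mul_assoc, Real.mul_self_sqrt (by norm_num)],
      ← mul_assoc, inv_mul_cancel₀ hs2, one_mul]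
  rw [BstarB]
  have hterm : ∀ i, minner (Bmat A i) (symMat T) • Bmat A i
      = minner (A i) T • Matrix.fromBlocks 0 (A i) (A i)ᵀ 0 := by
    intro i
    rw [hcoef i, Bmat, smul_smul]
    congr 1
    field_simp
  simp only [hterm]
  rw [AstarA, symMat]
  ext (a | a) (b | b) <;>
    simp [Matrix.sum_apply, Matrix.smul_apply, Matrix.transpose_apply, mul_comm]

lemma Zit_succ (A : Fin m → Matrix (Fin n₁) (Fin n₂) ℝ) (X : Matrix (Fin n₁) (Fin n₂) ℝ)
    (μ : ℝ) (V₀ : Matrix (Fin n₁) (Fin k) ℝ) (W₀ : Matrix (Fin n₂) (Fin k) ℝ) (t : ℕ) :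
    Zit A X μ V₀ W₀ (t + 1) = Zit A X μ V₀ W₀ t
      - μ • (symMat (AstarA A ((iter A X μ V₀ W₀ t).1 * (iter A X μ V₀ W₀ t).2ᵀ - X))
          * Zit A X μ V₀ W₀ t) := by
  set V := (iter A X μ V₀ W₀ t).1
  set W := (iter A X μ V₀ W₀ t).2
  set G := AstarA A (V * Wᵀ - X) with hG
  have hit : iter A X μ V₀ W₀ (t + 1) = (V - μ • (G * W), W - μ • (Gᵀ * V)) := rfl
  rw [Zit, hit, Zit]
  show Zstack (V - μ • (G * W)) (W - μ • (Gᵀ * V)) = Zstack V W - μ • (symMat G * Zstack V W)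
  rw [Zstack_sub_smul, symMat_mul_Zstack]

lemma Ztil_succ (A : Fin m → Matrix (Fin n₁) (Fin n₂) ℝ) (X : Matrix (Fin n₁) (Fin n₂) ℝ)
    (μ : ℝ) (V₀ : Matrix (Fin n₁) (Fin k) ℝ) (W₀ : Matrix (Fin n₂) (Fin k) ℝ) (t : ℕ) :
    Ztil A X μ V₀ W₀ (t + 1) = Ztil A X μ V₀ W₀ t
      + μ • (symMat (AstarA A ((iter A X μ V₀ W₀ t).1 * (iter A X μ V₀ W₀ t).2ᵀ - X))
          * Ztil A X μ V₀ W₀ t) := by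
  set V := (iter A X μ V₀ W₀ t).1
  set W := (iter A X μ V₀ W₀ t).2
  set G := AstarA A (V * Wᵀ - X) with hG
  have hit : iter A X μ V₀ W₀ (t + 1) = (V - μ • (G * W), W - μ • (Gᵀ * V)) := rfl
  rw [Ztil, hit, Ztil]
  show Zstack (V - μ • (G * W)) (-(W - μ • (Gᵀ * V)))
      = Zstack V (-W) + μ • (symMat G * Zstack V (-W))
  rw [symMat_mul_Zstack]
  have h1 : V - μ • (G * W) = V - μ • (-(G * (-W))) := by simp
  have h2 : -(W - μ • (Gᵀ * V)) = -W - μ • (-(Gᵀ * V)) := by module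
  rw [h1, h2, Zstack_sub_smul]
  ext (i | i) j <;> simp [Zstack] <;> ring

lemma Ztil_eq_flip (A : Fin m → Matrix (Fin n₁) (Fin n₂) ℝ) (X : Matrix (Fin n₁) (Fin n₂) ℝ)
    (μ : ℝ) (V₀ : Matrix (Fin n₁) (Fin k) ℝ) (W₀ : Matrix (Fin n₂) (Fin k) ℝ) (t : ℕ) :
    Ztil A X μ V₀ W₀ t = flipSign n₁ n₂ * Zit A X μ V₀ W₀ t := by
  rw [Ztil, Zit, Zstack, Zstack, flipSign, Matrix.mul_smul, Matrix.fromBlocks_mul_fromRows]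
  simp [Matrix.neg_mul]

lemma ZZt_sub_ZtilZtilt (A : Fin m → Matrix (Fin n₁) (Fin n₂) ℝ)
    (X : Matrix (Fin n₁) (Fin n₂) ℝ) (μ : ℝ) (V₀ : Matrix (Fin n₁) (Fin k) ℝ)
    (W₀ : Matrix (Fin n₂) (Fin k) ℝ) (t : ℕ) :
    Zit A X μ V₀ W₀ t * (Zit A X μ V₀ W₀ t)ᵀ
      - Ztil A X μ V₀ W₀ t * (Ztil A X μ V₀ W₀ t)ᵀ
      = symMat ((iter A X μ V₀ W₀ t).1 * (iter A X μ V₀ W₀ t).2ᵀ) := by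
  set V := (iter A X μ V₀ W₀ t).1
  set W := (iter A X μ V₀ W₀ t).2
  rw [Zit, Ztil, Zstack_mul_transpose, Zstack_mul_transpose, ← smul_sub]
  rw [symMat]
  ext (a | a) (b | b) <;>
    simp [Matrix.smul_apply, Matrix.mul_apply, Matrix.transpose_apply,
      Finset.mul_sum, ← Finset.sum_sub_distrib, ← Finset.sum_add_distrib] <;>
    refine Finset.sum_congr rfl fun l _ => by ring

/-- growth of the imbalance matrix. -/
theorem statement13_imbalance_growth
    {n₁ n₂ m k r : ℕ}
    (A : Fin m → Matrix (Fin n₁) (Fin n₂) ℝ) (X : Matrix (Fin n₁) (Fin n₂) ℝ)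
    (hrankX : X.rank = r)
    (μ : ℝ) (hμ : 0 < μ)
    (V₀ : Matrix (Fin n₁) (Fin k) ℝ) (W₀ : Matrix (Fin n₂) (Fin k) ℝ)
    (Z Z' : ℕ → Matrix (Fin n₁ ⊕ Fin n₂) (Fin k) ℝ)
    (Δ : ℕ → Matrix (Fin n₁ ⊕ Fin n₂) (Fin n₁ ⊕ Fin n₂) ℝ)
    (hZ : Z = Zit A X μ V₀ W₀) (hZ' : Z' = Ztil A X μ V₀ W₀) (hΔ : Δ = Δit A X μ V₀ W₀)
    (t : ℕ)
    (hZt : specNorm (Z t) ≤ 2 * Real.sqrt (specNorm X))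
    (hΔt : specNorm (Δ t) ≤ specNorm X) :
    specNorm ((Z' (t + 1))ᵀ * Z (t + 1))
      ≤ specNorm ((Z' t)ᵀ * Z t) + 400 * μ ^ 2 * specNorm X ^ 3 := by
  have hX0 : 0 ≤ specNorm X := specNorm_nonneg' X
  set V := (iter A X μ V₀ W₀ t).1
  set W := (iter A X μ V₀ W₀ t).2
  set S := symMat (AstarA A (V * Wᵀ - X)) with hS
  -- the imbalance recurrence
  have hrec : (Z' (t + 1))ᵀ * Z (t + 1)
      = (Z' t)ᵀ * Z t - (μ * μ) • ((Z' t)ᵀ * (S * (S * Z t))) := by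
    rw [hZ, hZ', Zit_succ, Ztil_succ, ← hZ, ← hZ']
    show ((Z' t) + μ • (S * Z' t))ᵀ * ((Z t) - μ • (S * Z t))
        = (Z' t)ᵀ * Z t - (μ * μ) • ((Z' t)ᵀ * (S * (S * Z t)))
    have hSt : Sᵀ = S := symMat_transpose _
    rw [Matrix.transpose_add, Matrix.transpose_smul, Matrix.transpose_mul, hSt]
    rw [Matrix.add_mul, Matrix.mul_sub, Matrix.mul_sub, Matrix.smul_mul, Matrix.smul_mul,
      Matrix.mul_smul, Matrix.mul_smul, Matrix.mul_assoc, Matrix.mul_assoc, smul_smul]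
    abel
  -- identify S with D - Δ t
  have hSD : S = (Z t * (Z t)ᵀ - Z' t * (Z' t)ᵀ - symMat X) - Δ t := by
    have hD : Z t * (Z t)ᵀ - Z' t * (Z' t)ᵀ - symMat X = symMat (V * Wᵀ - X) := by
      rw [hZ, hZ', ZZt_sub_ZtilZtilt, symMat_sub]
    have hB : BstarB A (symMat (V * Wᵀ - X)) = S := by
      rw [BstarB_symMat, hS]
    have hΔt : Δ t = symMat (V * Wᵀ - X) - BstarB A (symMat (V * Wᵀ - X)) := by
      rw [hΔ, Δit]
      have : Zit A X μ V₀ W₀ t * (Zit A X μ V₀ W₀ t)ᵀ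
          - Ztil A X μ V₀ W₀ t * (Ztil A X μ V₀ W₀ t)ᵀ - symMat X = symMat (V * Wᵀ - X) := by
        rw [ZZt_sub_ZtilZtilt, symMat_sub]
      rw [this]
    rw [hΔt, hB, hD]
    abel
  -- norm bounds
  set x := specNorm X
  set z := specNorm (Z t)
  have hz0 : 0 ≤ z := specNorm_nonneg' _
  have hzz : z * z ≤ 4 * x := by
    have h1 : Real.sqrt x * Real.sqrt x = x := Real.mul_self_sqrt hX0
    nlinarith [Real.sqrt_nonneg x]
  have hZt' : specNorm (Z' t) ≤ z := by
    calc specNorm (Z' t) = specNorm (flipSign n₁ n₂ * Z t) := by rw [hZ', hZ, Ztil_eq_flip]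
    _ ≤ specNorm (flipSign n₁ n₂) * specNorm (Z t) := specNorm_mul_le _ _
    _ ≤ 1 * z := by
        exact mul_le_mul_of_nonneg_right specNorm_flipSign_le hz0
    _ = z := one_mul z
  have hZt'T : specNorm ((Z' t)ᵀ) ≤ z := by rw [specNorm_transpose]; exact hZt'
  have hZtT : specNorm ((Z t)ᵀ) = z := specNorm_transpose _
  have hz'0 : 0 ≤ specNorm (Z' t) := specNorm_nonneg' _
  -- bound on ‖S‖
  have hSnorm : specNorm S ≤ 10 * x := by
    rw [hSD]
    calc specNorm (Z t * (Z t)ᵀ - Z' t * (Z' t)ᵀ - symMat X - Δ t)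
        ≤ specNorm (Z t * (Z t)ᵀ - Z' t * (Z' t)ᵀ - symMat X) + specNorm (Δ t) :=
          specNorm_sub_le _ _
      _ ≤ specNorm (Z t * (Z t)ᵀ - Z' t * (Z' t)ᵀ) + specNorm (symMat X) + specNorm (Δ t) := by
          have := specNorm_sub_le (Z t * (Z t)ᵀ - Z' t * (Z' t)ᵀ) (symMat X)
          linarith
      _ ≤ specNorm (Z t * (Z t)ᵀ) + specNorm (Z' t * (Z' t)ᵀ) + specNorm (symMat X)
            + specNorm (Δ t) := by
          have := specNorm_sub_le (Z t * (Z t)ᵀ) (Z' t * (Z' t)ᵀ)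
          linarith
      _ ≤ 10 * x := by
          have h1 : specNorm (Z t * (Z t)ᵀ) ≤ z * z := by
            have := specNorm_mul_le (Z t) ((Z t)ᵀ)
            rw [hZtT] at this
            exact this
          have h2 : specNorm (Z' t * (Z' t)ᵀ) ≤ z * z := by
            have h3 := specNorm_mul_le (Z' t) ((Z' t)ᵀ)
            have h4 : specNorm ((Z' t)ᵀ) = specNorm (Z' t) := specNorm_transpose _
            rw [h4] at h3
            nlinarith
          have h5 : specNorm (symMat X) ≤ x := specNorm_symMat_le X
          linarith
  have hS0 : 0 ≤ specNorm S := specNorm_nonneg' _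
  -- final estimate
  have hmain : specNorm ((Z' t)ᵀ * (S * (S * Z t))) ≤ 400 * x ^ 3 := by
    have b1 : specNorm (S * Z t) ≤ specNorm S * z := specNorm_mul_le _ _
    have b2 : specNorm (S * (S * Z t)) ≤ specNorm S * (specNorm S * z) := by
      calc specNorm (S * (S * Z t)) ≤ specNorm S * specNorm (S * Z t) := specNorm_mul_le _ _
        _ ≤ specNorm S * (specNorm S * z) := by
            exact mul_le_mul_of_nonneg_left b1 hS0
    have b3 : specNorm ((Z' t)ᵀ * (S * (S * Z t))) ≤ z * (specNorm S * (specNorm S * z)) := by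
      calc specNorm ((Z' t)ᵀ * (S * (S * Z t)))
          ≤ specNorm ((Z' t)ᵀ) * specNorm (S * (S * Z t)) := specNorm_mul_le _ _
        _ ≤ z * (specNorm S * (specNorm S * z)) := by
            have hnn : 0 ≤ specNorm (S * (S * Z t)) := specNorm_nonneg' _
            refine mul_le_mul hZt'T b2 hnn hz0
    have : z * (specNorm S * (specNorm S * z)) ≤ 400 * x ^ 3 := by
      nlinarith [mul_nonneg hS0 hz0, mul_nonneg hX0 hX0, sq_nonneg (specNorm S),
        mul_le_mul hSnorm hSnorm hS0 (by linarith : (0:ℝ) ≤ 10 * x)]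
    linarith
  -- put it together
  have htri : specNorm ((Z' (t + 1))ᵀ * Z (t + 1))
      ≤ specNorm ((Z' t)ᵀ * Z t) + (μ * μ) * specNorm ((Z' t)ᵀ * (S * (S * Z t))) := by
    rw [hrec]
    calc specNorm ((Z' t)ᵀ * Z t - (μ * μ) • ((Z' t)ᵀ * (S * (S * Z t))))
        ≤ specNorm ((Z' t)ᵀ * Z t) + specNorm ((μ * μ) • ((Z' t)ᵀ * (S * (S * Z t)))) :=
          specNorm_sub_le _ _
      _ = specNorm ((Z' t)ᵀ * Z t) + (μ * μ) * specNorm ((Z' t)ᵀ * (S * (S * Z t))) := by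
          rw [specNorm_smul, abs_of_nonneg (by positivity : (0:ℝ) ≤ μ * μ)]
  have hμ2 : 0 ≤ μ * μ := by positivity
  calc specNorm ((Z' (t + 1))ᵀ * Z (t + 1))
      ≤ specNorm ((Z' t)ᵀ * Z t) + (μ * μ) * specNorm ((Z' t)ᵀ * (S * (S * Z t))) := htri
    _ ≤ specNorm ((Z' t)ᵀ * Z t) + (μ * μ) * (400 * x ^ 3) := by
        have := mul_le_mul_of_nonneg_left hmain hμ2
        linarith
    _ = specNorm ((Z' t)ᵀ * Z t) + 400 * μ ^ 2 * x ^ 3 := by ring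


end AsymMatrixSensing
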